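/- In the lower-bound graph G_f(d), for every leaf z_j: (1) there is a unique path P(z_j) from the root u^f₁ to z_j; (2) this path survives the deletion of the ≤ f edges in Label_f(z_j); (3) for every i > j, the path P(z_i) does not survive the deletion of Label_f(z_j); and (4) for every i < j, |P(z_i)| > |P(z_j)|. -/

import Mathlib

/-- Depth of the lower-bound graph `G_f(d)`. -/
def depthG : ℕ → ℕ → ℕ
  | 0, _ => 0
  | 1, d => 6 + 2 * (d - 1)
  | (f + 2), d => d * depthG (f + 1) d

/-- Length of the connecting path `Q_i` at the top level of `G_{f+1}(d+1)` (vertices of the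
top path are indexed by `i : Fin (d+1)`, zero-based): at level `1` (i.e. `f = 0`) it is
`6 + 2(d - i)`, and for `f ≥ 1` it is `(d + 1 - i) · depth(f, d+1)`. -/
def QLen (f d : ℕ) (i : Fin (d + 1)) : ℕ :=
  match f with
  | 0 => 6 + 2 * (d - (i : ℕ))
  | (f' + 1) => (d + 1 - (i : ℕ)) * depthG (f' + 1) (d + 1)

/-- Vertex type of the lower-bound graph `G_f(d+1)`: `G_0` is a single vertex (a leaf);
`G_{f+1}` consists of the top path vertices `u_0,…,u_d`, the internal vertices `(i,k)` of
the connecting paths `Q_i`, and `d+1` disjoint copies of `G_f`. -/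
def Vtx : ℕ → ℕ → Type
  | 0, _ => Unit
  | (f + 1), d => (Fin (d + 1)) ⊕ ((Fin (d + 1)) × ℕ) ⊕ ((Fin (d + 1)) × Vtx f d)

/-- The root of `G_f(d+1)` (the first vertex `u_0` of the top path). -/
def rootVtx : (f d : ℕ) → Vtx f d
  | 0, _ => ()
  | (_ + 1), _ => Sum.inl 0

/-- One-directional adjacency relation generating `G_f(d+1)`. -/
def rel : (f d : ℕ) → Vtx f d → Vtx f d → Prop
  | 0, _, _, _ => False
  | (_ + 1), _, Sum.inl a, Sum.inl b => (a : ℕ) + 1 = (b : ℕ)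
  | (f + 1), d, Sum.inl a, Sum.inr (Sum.inl ik) =>
      ik.1 = a ∧ ik.2 = 1 ∧ 2 ≤ QLen f d ik.1
  | (f + 1), d, Sum.inl a, Sum.inr (Sum.inr iu) =>
      iu.1 = a ∧ QLen f d iu.1 ≤ 1 ∧ iu.2 = rootVtx f d
  | (f + 1), d, Sum.inr (Sum.inl ik), Sum.inr (Sum.inl ik') =>
      ik.1 = ik'.1 ∧ ik.2 + 1 = ik'.2 ∧ 1 ≤ ik.2 ∧ ik'.2 + 1 ≤ QLen f d ik.1
  | (f + 1), d, Sum.inr (Sum.inl ik), Sum.inr (Sum.inr iu) =>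
      ik.1 = iu.1 ∧ ik.2 + 1 = QLen f d ik.1 ∧ 1 ≤ ik.2 ∧ iu.2 = rootVtx f d
  | (f + 1), _, Sum.inr (Sum.inr iu), Sum.inr (Sum.inr iu') =>
      iu.1 = iu'.1 ∧ rel f _ iu.2 iu'.2
  | _, _, _, _ => False

/-- The lower-bound graph `G_f(d+1)` as a simple graph. -/
def Gf (f d : ℕ) : SimpleGraph (Vtx f d) := SimpleGraph.fromRel (rel f d)

/-- The leaf of `G_f(d+1)` addressed by a tuple `j : Fin f → Fin (d+1)` of copy choices
(leaves are ordered left to right by the lexicographic order on these tuples). -/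
def leafVtx : (f d : ℕ) → (Fin f → Fin (d + 1)) → Vtx f d
  | 0, _, _ => ()
  | (f + 1), d, j => Sum.inr (Sum.inr (j 0, leafVtx f d (fun m => j m.succ)))

/-- Embedding of the `i`-th copy of `G_f(d+1)` into `G_{f+1}(d+1)`. -/
def copyEmb (f d : ℕ) (i : Fin (d + 1)) : Vtx f d → Vtx (f + 1) d :=
  fun u => Sum.inr (Sum.inr (i, u))

/-- The label of a leaf: the set of at most `f` failed edges associated with it.  For the
leaf addressed by `j`, it consists of the top-path edge `(u_{j 0}, u_{j 0 + 1})` (when it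
exists, i.e. `j 0 < d`) together with the (embedded) label of the leaf in the copy. -/
def labelG : (f d : ℕ) → (Fin f → Fin (d + 1)) → Set (Sym2 (Vtx f d))
  | 0, _, _ => ∅
  | (f + 1), d, j =>
      (if h : (j 0 : ℕ) < d then
        {s((Sum.inl (j 0) : Vtx (f + 1) d),
           (Sum.inl (⟨(j 0 : ℕ) + 1, by omega⟩ : Fin (d + 1)) : Vtx (f + 1) d))}
      else ∅) ∪
      (Sym2.map (copyEmb f d (j 0)) '' labelG f d (fun m => j m.succ))

/-- Lexicographic (left-to-right) order on leaf addresses. -/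
def lexLt {f d : ℕ} (j j' : Fin f → Fin (d + 1)) : Prop :=
  ∃ k : Fin f, (∀ m : Fin f, m < k → j m = j' m) ∧ j k < j' k

instance instDecEqVtx : (f d : ℕ) → DecidableEq (Vtx f d)
  | 0, _ => inferInstanceAs (DecidableEq Unit)
  | (f + 1), d =>
      haveI := instDecEqVtx f d
      inferInstanceAs (DecidableEq ((Fin (d + 1)) ⊕ ((Fin (d + 1)) × ℕ) ⊕ ((Fin (d + 1)) × Vtx f d)))

lemma depthG_ge : ∀ f d : ℕ, 6 ≤ depthG (f + 1) (d + 1)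
  | 0, d => by simp [depthG]
  | (f + 1), d => by
      have h := depthG_ge f d
      have : depthG (f + 2) (d + 1) = (d + 1) * depthG (f + 1) (d + 1) := rfl
      rw [this]
      calc 6 ≤ depthG (f + 1) (d + 1) := h
        _ ≤ (d + 1) * depthG (f + 1) (d + 1) := Nat.le_mul_of_pos_left _ (by omega)

lemma QLen_ge (f d : ℕ) (i : Fin (d + 1)) : 2 ≤ QLen f d i := by
  cases f with
  | zero => simp [QLen]; omega
  | succ f =>
      have h := depthG_ge f d
      have hi : (i : ℕ) ≤ d := by omega
      have : QLen (f + 1) d i = (d + 1 - (i : ℕ)) * depthG (f + 1) (d + 1) := rfl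
      rw [this]
      calc 2 ≤ depthG (f + 1) (d + 1) := by omega
        _ = 1 * depthG (f + 1) (d + 1) := (one_mul _).symm
        _ ≤ (d + 1 - (i : ℕ)) * depthG (f + 1) (d + 1) :=
            Nat.mul_le_mul_right _ (by omega)

/-- Parent function. -/
def par : (f d : ℕ) → Vtx f d → Vtx f d
  | 0, _, v => v
  | (_ + 1), d, Sum.inl a =>
      if h : (a : ℕ) = 0 then Sum.inl a else Sum.inl ⟨(a : ℕ) - 1, by omega⟩
  | (f + 1), d, Sum.inr (Sum.inl ik) =>
      if h : 1 ≤ ik.2 ∧ ik.2 < QLen f d ik.1 then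
        (if ik.2 = 1 then Sum.inl ik.1 else Sum.inr (Sum.inl (ik.1, ik.2 - 1)))
      else Sum.inr (Sum.inl ik)
  | (f + 1), d, Sum.inr (Sum.inr iu) =>
      if iu.2 = rootVtx f d then Sum.inr (Sum.inl (iu.1, QLen f d iu.1 - 1))
      else if par f d iu.2 = iu.2 then Sum.inr (Sum.inr iu)
      else Sum.inr (Sum.inr (iu.1, par f d iu.2))

lemma par_inl (f d : ℕ) (a : Fin (d + 1)) : par (f + 1) d (Sum.inl a) =
    (if h : (a : ℕ) = 0 then (Sum.inl a : Vtx (f + 1) d) else Sum.inl ⟨(a : ℕ) - 1, by omega⟩) := rfl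

lemma par_inrl (f d : ℕ) (ik : Fin (d + 1) × ℕ) : par (f + 1) d (Sum.inr (Sum.inl ik)) =
    (if h : 1 ≤ ik.2 ∧ ik.2 < QLen f d ik.1 then
      (if ik.2 = 1 then (Sum.inl ik.1 : Vtx (f + 1) d) else Sum.inr (Sum.inl (ik.1, ik.2 - 1)))
    else Sum.inr (Sum.inl ik)) := rfl

lemma par_inrr (f d : ℕ) (iu : Fin (d + 1) × Vtx f d) : par (f + 1) d (Sum.inr (Sum.inr iu)) =
    (if iu.2 = rootVtx f d then (Sum.inr (Sum.inl (iu.1, QLen f d iu.1 - 1)) : Vtx (f + 1) d)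
    else if par f d iu.2 = iu.2 then Sum.inr (Sum.inr iu)
    else Sum.inr (Sum.inr (iu.1, par f d iu.2))) := rfl

/-- Height (distance from root along the tree). -/
def ht : (f d : ℕ) → Vtx f d → ℕ
  | 0, _, _ => 0
  | (_ + 1), _, Sum.inl a => (a : ℕ)
  | (_ + 1), _, Sum.inr (Sum.inl ik) => (ik.1 : ℕ) + ik.2
  | (f + 1), d, Sum.inr (Sum.inr iu) => (iu.1 : ℕ) + QLen f d iu.1 + ht f d iu.2

lemma par_root : ∀ f d : ℕ, par f d (rootVtx f d) = rootVtx f d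
  | 0, _ => rfl
  | (f + 1), d => by
      show par (f + 1) d (Sum.inl 0) = Sum.inl 0
      simp [par_inl, par_inrl, par_inrr]
      rfl

lemma ht_root : ∀ f d : ℕ, ht f d (rootVtx f d) = 0
  | 0, _ => rfl
  | (f + 1), d => by
      show ht (f + 1) d (Sum.inl 0) = 0
      simp [ht]

lemma ht_par : ∀ (f d : ℕ) (v : Vtx f d), par f d v ≠ v → ht f d (par f d v) + 1 = ht f d v
  | 0, _, v, h => absurd rfl h
  | (f + 1), d, Sum.inl a, h => by
      by_cases ha : (a : ℕ) = 0
      · exact absurd (by simp [par_inl, par_inrl, par_inrr, ha]; rfl) h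
      · simp only [par_inl, par_inrl, par_inrr, dif_neg ha, ht]
        omega
  | (f + 1), d, Sum.inr (Sum.inl ik), h => by
      by_cases hk : 1 ≤ ik.2 ∧ ik.2 < QLen f d ik.1
      · by_cases h1 : ik.2 = 1
        · simp only [par_inl, par_inrl, par_inrr, dif_pos hk, if_pos h1, ht]; omega
        · simp only [par_inl, par_inrl, par_inrr, dif_pos hk, if_neg h1, ht]; omega
      · exact absurd (by simp [par_inl, par_inrl, par_inrr, dif_neg hk]; rfl) h
  | (f + 1), d, Sum.inr (Sum.inr iu), h => by
      by_cases hr : iu.2 = rootVtx f d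
      · have h2 := QLen_ge f d iu.1
        have hrt : ht f d iu.2 = 0 := by rw [hr]; exact ht_root f d
        simp only [par_inl, par_inrl, par_inrr, if_pos hr, ht, hrt]
        omega
      · by_cases hp : par f d iu.2 = iu.2
        · exact absurd (by simp [par_inl, par_inrl, par_inrr, if_neg hr, if_pos hp]; rfl) h
        · have := ht_par f d iu.2 hp
          simp only [par_inl, par_inrl, par_inrr, if_neg hr, if_neg hp, ht]
          omega

lemma rel_ne : ∀ (f d : ℕ) (v w : Vtx f d), rel f d v w → v ≠ w
  | 0, _, _, _, h => h.elim
  | (f + 1), d, Sum.inl a, Sum.inl b, h => by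
      intro he; replace he : a = b := Sum.inl.inj he
      have h' : (a : ℕ) + 1 = (b : ℕ) := h
      omega
  | (f + 1), d, Sum.inl _, Sum.inr _, _ => fun he => by cases he
  | (f + 1), d, Sum.inr (Sum.inl _), Sum.inl _, h => False.elim h
  | (f + 1), d, Sum.inr (Sum.inr _), Sum.inl _, h => False.elim h
  | (f + 1), d, Sum.inr (Sum.inl ik), Sum.inr (Sum.inl ik'), h => by
      obtain ⟨h1, h2, _⟩ := h
      intro he
      have he2 : ik = ik' := Sum.inl.inj (Sum.inr.inj he)
      rw [he2] at h2; omega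
  | (f + 1), d, Sum.inr (Sum.inl _), Sum.inr (Sum.inr _), _ => fun he =>
      (by cases he)
  | (f + 1), d, Sum.inr (Sum.inr _), Sum.inr (Sum.inl _), h => False.elim h
  | (f + 1), d, Sum.inr (Sum.inr iu), Sum.inr (Sum.inr iu'), h => by
      obtain ⟨h1, h2⟩ := h
      have hne := rel_ne f d iu.2 iu'.2 h2
      intro he
      have he2 : iu = iu' := Sum.inr.inj (Sum.inr.inj he)
      exact hne (congrArg Prod.snd he2)
lemma par_of_rel : ∀ (f d : ℕ) (v w : Vtx f d), rel f d v w → par f d w = v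
  | 0, _, _, _, h => False.elim h
  | (f + 1), d, Sum.inl a, Sum.inl b, h => by
      have h' : (a : ℕ) + 1 = (b : ℕ) := h
      have hb : (b : ℕ) ≠ 0 := by omega
      simp only [par_inl, par_inrl, par_inrr, dif_neg hb]
      congr 1
      refine Fin.ext ?_
      show (b : ℕ) - 1 = (a : ℕ)
      omega
  | (f + 1), d, Sum.inl a, Sum.inr (Sum.inl (i, k)), h => by
      obtain ⟨h1, h2, h3⟩ := h
      have h1' : i = a := h1
      have h2' : k = 1 := h2
      have h3' : 2 ≤ QLen f d i := h3
      have hc : 1 ≤ (i, k).2 ∧ (i, k).2 < QLen f d (i, k).1 := by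
        refine ⟨by omega, ?_⟩
        show k < QLen f d i
        omega
      simp only [par_inl, par_inrl, par_inrr, dif_pos hc, if_pos h2']
      rw [h1']
  | (f + 1), d, Sum.inl a, Sum.inr (Sum.inr iu), h => by
      obtain ⟨_, h2, _⟩ := h
      exact absurd h2 (by have := QLen_ge f d iu.1; omega)
  | (f + 1), d, Sum.inr (Sum.inl _), Sum.inl _, h => False.elim h
  | (f + 1), d, Sum.inr (Sum.inr _), Sum.inl _, h => False.elim h
  | (f + 1), d, Sum.inr (Sum.inl (i, k)), Sum.inr (Sum.inl (i', k')), h => by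
      obtain ⟨h1, h2, h3, h4⟩ := h
      have h1' : i = i' := h1
      have h2' : k + 1 = k' := h2
      have h4' : k' + 1 ≤ QLen f d i := h4
      subst h1'
      have hc : 1 ≤ (i, k').2 ∧ (i, k').2 < QLen f d (i, k').1 := ⟨by omega, by show k' < QLen f d i; omega⟩
      have hne : (i, k').2 ≠ 1 := by show k' ≠ 1; omega
      simp only [par_inl, par_inrl, par_inrr, dif_pos hc, if_neg hne]
      have hk : k' - 1 = k := by omega
      show (Sum.inr (Sum.inl (i, k' - 1)) : Vtx (f + 1) d) = Sum.inr (Sum.inl (i, k))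
      rw [hk]
  | (f + 1), d, Sum.inr (Sum.inl (i, k)), Sum.inr (Sum.inr (i', u)), h => by
      obtain ⟨h1, h2, h3, h4⟩ := h
      have h1' : i = i' := h1
      have h2' : k + 1 = QLen f d i := h2
      subst h1'
      have h4' : (i, u).2 = rootVtx f d := h4
      simp only [par_inl, par_inrl, par_inrr, if_pos h4']
      have hk : QLen f d i - 1 = k := by omega
      show (Sum.inr (Sum.inl (i, QLen f d i - 1)) : Vtx (f + 1) d) = Sum.inr (Sum.inl (i, k))
      rw [hk]
  | (f + 1), d, Sum.inr (Sum.inr _), Sum.inr (Sum.inl _), h => False.elim h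
  | (f + 1), d, Sum.inr (Sum.inr (i, u)), Sum.inr (Sum.inr (i', u')), h => by
      obtain ⟨h1, h2⟩ := h
      have h1' : i = i' := h1
      subst h1'
      have hihp : par f d u' = u := par_of_rel f d u u' h2
      have hne : u ≠ u' := rel_ne f d u u' h2
      have hr : (i, u').2 ≠ rootVtx f d := by
        show u' ≠ rootVtx f d
        intro he
        rw [he, par_root] at hihp
        exact hne (by rw [← hihp, he])
      have hp : ¬ par f d (i, u').2 = (i, u').2 := by
        show ¬ par f d u' = u'
        rw [hihp]; exact hne
      simp only [par_inl, par_inrl, par_inrr, if_neg hr, if_neg hp]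
      rw [hihp]

lemma rel_of_par : ∀ (f d : ℕ) (w : Vtx f d), par f d w ≠ w → rel f d (par f d w) w
  | 0, _, _, h => absurd rfl h
  | (f + 1), d, Sum.inl b, h => by
      by_cases hb : (b : ℕ) = 0
      · exact absurd (by simp [par_inl, par_inrl, par_inrr, hb]; rfl) h
      · simp only [par_inl, par_inrl, par_inrr, dif_neg hb]
        show ((⟨(b : ℕ) - 1, _⟩ : Fin (d + 1)) : ℕ) + 1 = (b : ℕ)
        show (b : ℕ) - 1 + 1 = (b : ℕ)
        omega
  | (f + 1), d, Sum.inr (Sum.inl (i, k)), h => by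
      by_cases hk : 1 ≤ (i, k).2 ∧ (i, k).2 < QLen f d (i, k).1
      · have hk1 : 1 ≤ k := hk.1
        have hk2 : k < QLen f d i := hk.2
        by_cases h1 : (i, k).2 = 1
        · have h1' : k = 1 := h1
          simp only [par_inl, par_inrl, par_inrr, dif_pos hk, if_pos h1]
          exact ⟨rfl, h1', by omega⟩
        · have h1' : k ≠ 1 := h1
          simp only [par_inl, par_inrl, par_inrr, dif_pos hk, if_neg h1]
          refine ⟨rfl, ?_, ?_, ?_⟩
          · show k - 1 + 1 = k; omega
          · show 1 ≤ k - 1; omega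
          · show k + 1 ≤ QLen f d i; omega
      · exact absurd (by simp [par_inl, par_inrl, par_inrr, dif_neg hk]; rfl) h
  | (f + 1), d, Sum.inr (Sum.inr (i, u)), h => by
      by_cases hr : (i, u).2 = rootVtx f d
      · have h2 := QLen_ge f d i
        simp only [par_inl, par_inrl, par_inrr, if_pos hr]
        refine ⟨rfl, ?_, ?_, hr⟩
        · show QLen f d i - 1 + 1 = QLen f d i; omega
        · show 1 ≤ QLen f d i - 1; omega
      · by_cases hp : par f d (i, u).2 = (i, u).2
        · exact absurd (by simp [par_inl, par_inrl, par_inrr, if_neg hr, if_pos hp]; rfl) h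
        · simp only [par_inl, par_inrl, par_inrr, if_neg hr, if_neg hp]
          exact ⟨rfl, rel_of_par f d u hp⟩

lemma adj_par (f d : ℕ) (v : Vtx f d) (h : par f d v ≠ v) : (Gf f d).Adj (par f d v) v :=
  (SimpleGraph.fromRel_adj _ _ _).2 ⟨h, Or.inl (rel_of_par f d v h)⟩

lemma adj_cases (f d : ℕ) {v w : Vtx f d} (h : (Gf f d).Adj v w) :
    par f d w = v ∨ par f d v = w := by
  rcases (SimpleGraph.fromRel_adj _ _ _).1 h with ⟨hne, hr | hr⟩
  · exact Or.inl (par_of_rel f d _ _ hr)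
  · exact Or.inr (par_of_rel f d _ _ hr)
def chainW (f d : ℕ) (v : Vtx f d) : Option ((Gf f d).Walk (rootVtx f d) v) :=
  if hv : v = rootVtx f d then some (SimpleGraph.Walk.nil.copy rfl hv.symm)
  else if hp : par f d v = v then none
  else (chainW f d (par f d v)).map (fun q => q.concat (adj_par f d v hp))
termination_by ht f d v
decreasing_by
  have := ht_par f d v hp
  omega

lemma rev_path_eq_chain (f d : ℕ) : ∀ {v : Vtx f d} (q : (Gf f d).Walk v (rootVtx f d)),
    q.IsPath → chainW f d v = some q.reverse
  | _, SimpleGraph.Walk.nil, _ => by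
      rw [chainW]
      simp
  | v, SimpleGraph.Walk.cons (v := w) h q, hpath => by
      have ih := fun hq => rev_path_eq_chain f d q hq
      rw [SimpleGraph.Walk.cons_isPath_iff] at hpath
      obtain ⟨hq, hv⟩ := hpath
      rcases adj_cases f d h with hpw | hpv
      · -- par w = v : bad direction, contradiction
        exfalso
        have hwroot : w ≠ rootVtx f d := by
          intro he
          subst he
          rw [par_root] at hpw
          subst hpw
          exact hv (q.end_mem_support)
        have hppw : par f d w ≠ w := by rw [hpw]; exact h.ne
        have hcw := ih hq
        rw [chainW, dif_neg hwroot, dif_neg hppw] at hcw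
        obtain ⟨r, hr, hre⟩ := Option.map_eq_some_iff.1 hcw
        have hvr : v ∈ r.support := by rw [← hpw]; exact r.end_mem_support
        have : v ∈ q.reverse.support := by
          rw [← hre, SimpleGraph.Walk.support_concat]
          exact List.mem_append.2 (Or.inl hvr)
        rw [SimpleGraph.Walk.support_reverse, List.mem_reverse] at this
        exact hv this
      · -- par v = w
        subst hpv
        have hvroot : v ≠ rootVtx f d := by
          intro he
          subst he
          exact hv (q.end_mem_support)
        have hppv : par f d v ≠ v := h.ne.symm
        rw [chainW, dif_neg hvroot, dif_neg hppv, ih hq, Option.map_some]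
        rw [SimpleGraph.Walk.reverse_cons, ← SimpleGraph.Walk.concat_eq_append]

lemma path_eq_chain (f d : ℕ) {v : Vtx f d} (p : (Gf f d).Walk (rootVtx f d) v)
    (hp : p.IsPath) : chainW f d v = some p := by
  have := rev_path_eq_chain f d p.reverse ((SimpleGraph.Walk.isPath_reverse_iff p).2 hp)
  rwa [SimpleGraph.Walk.reverse_reverse] at this

lemma path_unique (f d : ℕ) {v : Vtx f d} (p p' : (Gf f d).Walk (rootVtx f d) v)
    (hp : p.IsPath) (hp' : p'.IsPath) : p = p' := by
  have h1 := path_eq_chain f d p hp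
  have h2 := path_eq_chain f d p' hp'
  rw [h1] at h2
  exact Option.some.inj h2
section Construction

open SimpleGraph

lemma adjTop {f d : ℕ} (x y : Fin (d + 1)) (h : (x : ℕ) + 1 = (y : ℕ)) :
    (Gf (f + 1) d).Adj (Sum.inl x) (Sum.inl y) :=
  (SimpleGraph.fromRel_adj _ _ _).2
    ⟨fun he => by replace he : x = y := Sum.inl.inj he; rw [he] at h; omega, Or.inl h⟩

lemma adjQ1 {f d : ℕ} (i : Fin (d + 1)) :
    (Gf (f + 1) d).Adj (Sum.inl i) (Sum.inr (Sum.inl (i, 1))) :=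
  (SimpleGraph.fromRel_adj _ _ _).2
    ⟨fun he => (by cases he), Or.inl ⟨rfl, rfl, QLen_ge f d i⟩⟩

lemma adjQk {f d : ℕ} (i : Fin (d + 1)) (k : ℕ) (h1 : 1 ≤ k) (h2 : k + 2 ≤ QLen f d i) :
    (Gf (f + 1) d).Adj (Sum.inr (Sum.inl (i, k))) (Sum.inr (Sum.inl (i, k + 1))) :=
  (SimpleGraph.fromRel_adj _ _ _).2
    ⟨fun he => by
        have := Sum.inl.inj (Sum.inr.inj he)
        have : k = k + 1 := congrArg Prod.snd this
        omega,
      Or.inl ⟨rfl, rfl, h1, by show k + 1 + 1 ≤ QLen f d i; omega⟩⟩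

lemma adjQend {f d : ℕ} (i : Fin (d + 1)) (k : ℕ) (h1 : 1 ≤ k) (h2 : k + 1 = QLen f d i) :
    (Gf (f + 1) d).Adj (Sum.inr (Sum.inl (i, k))) (Sum.inr (Sum.inr (i, rootVtx f d))) :=
  (SimpleGraph.fromRel_adj _ _ _).2
    ⟨fun he => (by cases he), Or.inl ⟨rfl, h2, h1, rfl⟩⟩

lemma copyEmb_injective (f d : ℕ) (i : Fin (d + 1)) : Function.Injective (copyEmb f d i) :=
  fun u u' he => congrArg Prod.snd (Sum.inr.inj (Sum.inr.inj he))

/-- The copy embedding as a graph homomorphism. -/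
def copyHom (f d : ℕ) (i : Fin (d + 1)) : Gf f d →g Gf (f + 1) d where
  toFun := copyEmb f d i
  map_rel' := by
    intro u u' h
    rcases (SimpleGraph.fromRel_adj _ _ _).1 h with ⟨hne, hr | hr⟩
    · exact (SimpleGraph.fromRel_adj _ _ _).2
        ⟨fun he => hne (copyEmb_injective f d i he), Or.inl ⟨rfl, hr⟩⟩
    · exact (SimpleGraph.fromRel_adj _ _ _).2
        ⟨fun he => hne (copyEmb_injective f d i he), Or.inr ⟨rfl, hr⟩⟩

/-- Walk along the top path from `u_0` to `u_a`. -/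
def topWalk (f d : ℕ) : (a : ℕ) → (ha : a ≤ d) →
    (Gf (f + 1) d).Walk (rootVtx (f + 1) d) (Sum.inl ⟨a, by omega⟩)
  | 0, _ => SimpleGraph.Walk.nil.copy rfl (by congr 1)
  | (a + 1), ha =>
      (topWalk f d a (by omega)).concat
        (adjTop ⟨a, by omega⟩ ⟨a + 1, by omega⟩ rfl)

/-- Walk down the connecting path from `(i, k)` to the root of copy `i`. -/
def qTail (f d : ℕ) (i : Fin (d + 1)) : (k : ℕ) → 1 ≤ k → k < QLen f d i →
    (Gf (f + 1) d).Walk (Sum.inr (Sum.inl (i, k))) (Sum.inr (Sum.inr (i, rootVtx f d)))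
  | k, h1, h2 =>
    if h : k + 1 = QLen f d i then
      SimpleGraph.Walk.cons (adjQend i k h1 h) SimpleGraph.Walk.nil
    else
      SimpleGraph.Walk.cons (adjQk i k h1 (by omega))
        (qTail f d i (k + 1) (by omega) (by omega))
termination_by k _ _ => QLen f d i - k

/-- Walk from `u_i` down the connecting path `Q_i` to the root of copy `i`. -/
def QWalk (f d : ℕ) (i : Fin (d + 1)) :
    (Gf (f + 1) d).Walk (Sum.inl i) (Sum.inr (Sum.inr (i, rootVtx f d))) :=
  SimpleGraph.Walk.cons (adjQ1 i) (qTail f d i 1 le_rfl (by have := QLen_ge f d i; omega))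

/-- The canonical root-to-leaf path. -/
def pathTo : (f d : ℕ) → (j : Fin f → Fin (d + 1)) →
    (Gf f d).Walk (rootVtx f d) (leafVtx f d j)
  | 0, _, _ => SimpleGraph.Walk.nil
  | (f + 1), d, j =>
      (((topWalk f d (j 0) (by omega)).copy rfl
          (by congr 1)).append (QWalk f d (j 0))).append
        ((pathTo f d (fun m => j m.succ)).map (copyHom f d (j 0)))

end Construction
section Good

open SimpleGraph

variable {f d : ℕ}

/-- A walk is good if vertex heights strictly increase along it. -/
def GoodW {u v : Vtx f d} (p : (Gf f d).Walk u v) : Prop :=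
  List.IsChain (fun a b => ht f d a < ht f d b) p.support

lemma head?_support {u v : Vtx f d} (p : (Gf f d).Walk u v) :
    p.support.head? = some u := by
  rw [SimpleGraph.Walk.support_eq_cons]; rfl

lemma getLast?_support {u v : Vtx f d} (p : (Gf f d).Walk u v) :
    p.support.getLast? = some v := by
  rw [← List.head?_reverse, ← SimpleGraph.Walk.support_reverse, head?_support]

lemma good_nil {u : Vtx f d} : GoodW (SimpleGraph.Walk.nil : (Gf f d).Walk u u) :=
  List.isChain_singleton u

lemma good_cons {u v w : Vtx f d} (h : (Gf f d).Adj u v) {p : (Gf f d).Walk v w}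
    (hlt : ht f d u < ht f d v) (hp : GoodW p) : GoodW (SimpleGraph.Walk.cons h p) := by
  refine List.isChain_cons.2 ⟨?_, hp⟩
  intro y hy
  rw [head?_support] at hy
  cases hy
  exact hlt

lemma good_append {u v w : Vtx f d} {p : (Gf f d).Walk u v} {q : (Gf f d).Walk v w}
    (hp : GoodW p) (hq : GoodW q) : GoodW (p.append q) := by
  rw [GoodW, SimpleGraph.Walk.support_append, List.isChain_append]
  refine ⟨hp, ?_, ?_⟩
  · have := (List.isChain_cons.1 (by rw [← SimpleGraph.Walk.support_eq_cons]; exact hq)).2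
    exact this
  · intro x hx y hy
    rw [getLast?_support] at hx
    cases hx
    exact (List.isChain_cons.1 (by rw [← SimpleGraph.Walk.support_eq_cons]; exact hq)).1 y hy

lemma good_concat {u v w : Vtx f d} {p : (Gf f d).Walk u v} (h : (Gf f d).Adj v w)
    (hp : GoodW p) (hlt : ht f d v < ht f d w) : GoodW (p.concat h) := by
  rw [SimpleGraph.Walk.concat_eq_append]
  exact good_append hp (good_cons h hlt good_nil)

lemma good_copy {u v u' v' : Vtx f d} (p : (Gf f d).Walk u v) (hu : u = u') (hv : v = v')
    (hp : GoodW p) : GoodW (p.copy hu hv) := by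
  rw [GoodW, SimpleGraph.Walk.support_copy]; exact hp

lemma good_map {u v : Vtx f d} (i : Fin (d + 1)) {p : (Gf f d).Walk u v}
    (hp : GoodW p) : GoodW (p.map (copyHom f d i)) := by
  rw [GoodW, SimpleGraph.Walk.support_map, List.isChain_map]
  refine List.IsChain.imp ?_ hp
  intro a b hab
  show (i : ℕ) + QLen f d i + ht f d a < (i : ℕ) + QLen f d i + ht f d b
  omega

lemma isPath_of_good {u v : Vtx f d} {p : (Gf f d).Walk u v} (hp : GoodW p) : p.IsPath := by
  rw [SimpleGraph.Walk.isPath_def]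
  haveI : IsTrans (Vtx f d) (fun a b => ht f d a < ht f d b) :=
    ⟨fun _ _ _ h1 h2 => lt_trans h1 h2⟩
  have hpw : p.support.Pairwise (fun a b => ht f d a < ht f d b) :=
    List.isChain_iff_pairwise.1 hp
  exact hpw.imp (fun h => by intro he; rw [he] at h; omega)

lemma good_topWalk (f d : ℕ) : ∀ (a : ℕ) (ha : a ≤ d), GoodW (topWalk f d a ha)
  | 0, _ => good_copy _ _ _ good_nil
  | (a + 1), ha => good_concat _ (good_topWalk f d a (by omega)) (by
      show a < a + 1
      omega)

lemma good_qTail (f d : ℕ) (i : Fin (d + 1)) :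
    ∀ (k : ℕ) (h1 : 1 ≤ k) (h2 : k < QLen f d i), GoodW (qTail f d i k h1 h2)
  | k, h1, h2 => by
      rw [qTail]
      split
      · refine good_cons _ ?_ good_nil
        show (i : ℕ) + k < (i : ℕ) + QLen f d i + ht f d (rootVtx f d)
        omega
      · refine good_cons _ ?_ (good_qTail f d i (k + 1) (by omega) (by omega))
        show (i : ℕ) + k < (i : ℕ) + (k + 1)
        omega
termination_by k _ _ => QLen f d i - k

lemma good_QWalk (f d : ℕ) (i : Fin (d + 1)) : GoodW (QWalk f d i) := by
  refine good_cons _ ?_ (good_qTail f d i 1 le_rfl _)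
  show (i : ℕ) < (i : ℕ) + 1
  omega

lemma good_pathTo : ∀ (f d : ℕ) (j : Fin f → Fin (d + 1)), GoodW (pathTo f d j)
  | 0, d, j => good_nil
  | (f + 1), d, j =>
      good_append
        (good_append (good_copy _ _ _ (good_topWalk f d (j 0) _)) (good_QWalk f d (j 0)))
        (good_map (j 0) (good_pathTo f d (fun m => j m.succ)))

lemma isPath_pathTo (f d : ℕ) (j : Fin f → Fin (d + 1)) : (pathTo f d j).IsPath :=
  isPath_of_good (good_pathTo f d j)

/-- Length of the canonical root-to-leaf path. -/
def plen : (f d : ℕ) → (Fin f → Fin (d + 1)) → ℕ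
  | 0, _, _ => 0
  | (f + 1), d, j => (j 0 : ℕ) + QLen f d (j 0) + plen f d (fun m => j m.succ)

lemma length_topWalk (f d : ℕ) : ∀ (a : ℕ) (ha : a ≤ d), (topWalk f d a ha).length = a
  | 0, _ => by erw [topWalk, SimpleGraph.Walk.length_copy]; rfl
  | (a + 1), ha => by
      erw [topWalk, SimpleGraph.Walk.length_concat, length_topWalk f d a (by omega)]

lemma length_qTail (f d : ℕ) (i : Fin (d + 1)) :
    ∀ (k : ℕ) (h1 : 1 ≤ k) (h2 : k < QLen f d i),
      (qTail f d i k h1 h2).length + k = QLen f d i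
  | k, h1, h2 => by
      rw [qTail]
      split
      · rename_i h
        erw [SimpleGraph.Walk.length_cons, SimpleGraph.Walk.length_nil]
        omega
      · rename_i h
        have := length_qTail f d i (k + 1) (by omega) (by omega)
        erw [SimpleGraph.Walk.length_cons]
        omega
termination_by k _ _ => QLen f d i - k

lemma length_QWalk (f d : ℕ) (i : Fin (d + 1)) : (QWalk f d i).length = QLen f d i := by
  have := length_qTail f d i 1 le_rfl (by have := QLen_ge f d i; omega)
  erw [QWalk, SimpleGraph.Walk.length_cons]
  omega

lemma length_pathTo : ∀ (f d : ℕ) (j : Fin f → Fin (d + 1)),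
    (pathTo f d j).length = plen f d j
  | 0, _, _ => rfl
  | (f + 1), d, j => by
      erw [pathTo, SimpleGraph.Walk.length_append, SimpleGraph.Walk.length_append,
        SimpleGraph.Walk.length_copy, SimpleGraph.Walk.length_map, length_topWalk,
        length_QWalk, length_pathTo f d (fun m => j m.succ)]
      rfl
end Good

section Edges

open SimpleGraph

lemma mem_edges_topWalk (f d : ℕ) : ∀ (a : ℕ) (ha : a ≤ d),
    ∀ e ∈ (topWalk f d a ha).edges, ∃ x y : Fin (d + 1),
      (x : ℕ) + 1 = (y : ℕ) ∧ (y : ℕ) ≤ a ∧ e = s(Sum.inl x, Sum.inl y)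
  | 0, _ => by
      rw [topWalk]
      intro e he
      erw [SimpleGraph.Walk.edges_copy, SimpleGraph.Walk.edges_nil] at he
      exact absurd he ((List.not_mem_nil (a := e)))
  | (a + 1), ha => by
      rw [topWalk]
      intro e he
      erw [SimpleGraph.Walk.edges_concat, List.concat_eq_append, List.mem_append] at he
      rcases he with he | he
      · obtain ⟨x, y, h1, h2, h3⟩ := mem_edges_topWalk f d a (by omega) e he
        exact ⟨x, y, h1, by omega, h3⟩
      · rw [List.mem_singleton] at he
        exact ⟨⟨a, by omega⟩, ⟨a + 1, by omega⟩, rfl, by simp, he⟩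

lemma edge_mem_topWalk (f d : ℕ) : ∀ (a : ℕ) (ha : a ≤ d) (x y : Fin (d + 1)),
    (x : ℕ) + 1 = (y : ℕ) → (y : ℕ) ≤ a →
      s(Sum.inl x, Sum.inl y) ∈ (topWalk f d a ha).edges
  | 0, _, x, y, hxy, hy => by omega
  | (a + 1), ha, x, y, hxy, hy => by
      erw [topWalk, SimpleGraph.Walk.edges_concat, List.concat_eq_append, List.mem_append]
      by_cases hya : (y : ℕ) ≤ a
      · exact Or.inl (edge_mem_topWalk f d a (by omega) x y hxy hya)
      · right
        erw [List.mem_singleton, Sym2.eq_iff]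
        left
        constructor
        · exact congrArg Sum.inl (Fin.ext (show (x : ℕ) = a by omega))
        · exact congrArg Sum.inl (Fin.ext (show (y : ℕ) = a + 1 by omega))

lemma mem_edges_qTail (f d : ℕ) (i : Fin (d + 1)) :
    ∀ (k : ℕ) (h1 : 1 ≤ k) (h2 : k < QLen f d i),
      ∀ e ∈ (qTail f d i k h1 h2).edges, ∃ (x : Fin (d + 1) × ℕ) (z : Vtx (f + 1) d),
        e = s(Sum.inr (Sum.inl x), z)
  | k, h1, h2 => by
      rw [qTail]
      split
      · intro e he
        erw [SimpleGraph.Walk.edges_cons, SimpleGraph.Walk.edges_nil, List.mem_singleton] at he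
        exact ⟨(i, k), _, he⟩
      · intro e he
        erw [SimpleGraph.Walk.edges_cons, List.mem_cons] at he
        rcases he with he | he
        · exact ⟨(i, k), _, he⟩
        · exact mem_edges_qTail f d i (k + 1) (by omega) (by omega) e he
termination_by k _ _ => QLen f d i - k

lemma mem_edges_QWalk (f d : ℕ) (i : Fin (d + 1)) :
    ∀ e ∈ (QWalk f d i).edges, ∃ (x : Fin (d + 1) × ℕ) (z : Vtx (f + 1) d),
      e = s(Sum.inr (Sum.inl x), z) := by
  intro e he
  erw [QWalk, SimpleGraph.Walk.edges_cons, List.mem_cons] at he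
  rcases he with he | he
  · exact ⟨(i, 1), Sum.inl i, by rw [he]; exact Sym2.eq_swap⟩
  · exact mem_edges_qTail f d i 1 le_rfl _ e he

lemma label_shape (f d : ℕ) (j : Fin (f + 1) → Fin (d + 1)) :
    ∀ e ∈ labelG (f + 1) d j,
      (∃ x y : Fin (d + 1), e = s(Sum.inl x, Sum.inl y)) ∨
      (∃ u u' : Vtx f d, e = s(copyEmb f d (j 0) u, copyEmb f d (j 0) u')) := by
  intro e he
  rw [labelG, Set.mem_union] at he
  rcases he with he | he
  · left
    split at he
    · erw [Set.mem_singleton_iff] at he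
      exact ⟨_, _, he⟩
    · exact absurd he (Set.notMem_empty e)
  · right
    obtain ⟨e', _, he'⟩ := he
    induction e' using Sym2.ind with
    | _ u u' => exact ⟨u, u', by rw [← he', Sym2.map_pair_eq]⟩

lemma pathTo_avoids_label : ∀ (f d : ℕ) (j : Fin f → Fin (d + 1)),
    ∀ e ∈ (pathTo f d j).edges, e ∉ labelG f d j
  | 0, d, j => by intro e he; simp [labelG]
  | (f + 1), d, j => by
      intro e he hl
      erw [pathTo, SimpleGraph.Walk.edges_append, SimpleGraph.Walk.edges_append,
        SimpleGraph.Walk.edges_copy, List.mem_append, List.mem_append] at he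
      rcases label_shape f d j e hl with ⟨x, y, hxy⟩ | ⟨u, u', huu⟩
      · -- label edge is a top edge
        rcases he with (he | he) | he
        · -- top walk edge; must coincide with the label top edge, contradiction on indices
          obtain ⟨x', y', h1, h2, h3⟩ := mem_edges_topWalk f d (j 0) _ e he
          -- e is in the label, so it is the specific top edge
          rw [labelG, Set.mem_union] at hl
          rcases hl with hl | hl
          · split at hl
            · erw [Set.mem_singleton_iff] at hl
              rw [h3] at hl
              erw [Sym2.eq_iff] at hl
              rcases hl with ⟨ha, hb⟩ | ⟨ha, hb⟩
              · have ha' : (x' : ℕ) = (j 0 : ℕ) := congrArg Fin.val (Sum.inl.inj ha)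
                have hb' : (y' : ℕ) = (j 0 : ℕ) + 1 := congrArg Fin.val (Sum.inl.inj hb)
                omega
              · have ha' : (x' : ℕ) = (j 0 : ℕ) + 1 := congrArg Fin.val (Sum.inl.inj ha)
                have hb' : (y' : ℕ) = (j 0 : ℕ) := congrArg Fin.val (Sum.inl.inj hb)
                omega
            · exact absurd hl (Set.notMem_empty e)
          · obtain ⟨e', _, he'⟩ := hl
            induction e' using Sym2.ind with
            | _ u u' =>
                rw [Sym2.map_pair_eq] at he'
                erw [h3, Sym2.eq_iff] at he'
                rcases he' with ⟨ha, _⟩ | ⟨ha, _⟩ <;> cases ha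
        · -- Q walk edge : has an internal endpoint, but label edge has inl endpoints
          obtain ⟨xq, z, hz⟩ := mem_edges_QWalk f d (j 0) e he
          erw [hxy, Sym2.eq_iff] at hz
          rcases hz with ⟨ha, _⟩ | ⟨_, ha⟩ <;> cases ha
        · -- copy edge, label edge is a top edge: impossible
          erw [SimpleGraph.Walk.edges_map, List.mem_map] at he
          obtain ⟨e₀, _, he₀⟩ := he
          induction e₀ using Sym2.ind with
          | _ u u' =>
              rw [Sym2.map_pair_eq] at he₀
              rw [hxy] at he₀
              erw [Sym2.eq_iff] at he₀
              rcases he₀ with ⟨ha, _⟩ | ⟨_, ha⟩ <;> cases ha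
      · -- label edge is a copy edge
        rcases he with (he | he) | he
        · obtain ⟨x', y', h1, h2, h3⟩ := mem_edges_topWalk f d (j 0) _ e he
          erw [huu, Sym2.eq_iff] at h3
          rcases h3 with ⟨ha, _⟩ | ⟨_, ha⟩ <;> cases ha
        · obtain ⟨xq, z, hz⟩ := mem_edges_QWalk f d (j 0) e he
          rw [huu] at hz
          erw [Sym2.eq_iff] at hz
          rcases hz with ⟨ha, _⟩ | ⟨_, ha⟩ <;>
            cases ha
        · -- both are copy edges: use injectivity and induction
          erw [SimpleGraph.Walk.edges_map, List.mem_map] at he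
          obtain ⟨e₀, he₀mem, he₀⟩ := he
          rw [labelG, Set.mem_union] at hl
          rcases hl with hl | hl
          · split at hl
            · erw [Set.mem_singleton_iff] at hl
              induction e₀ using Sym2.ind with
              | _ u₀ u₀' =>
                  rw [Sym2.map_pair_eq] at he₀
                  erw [← he₀, Sym2.eq_iff] at hl
                  rcases hl with ⟨ha, _⟩ | ⟨_, ha⟩ <;> cases ha
            · exact absurd hl (Set.notMem_empty e)
          · obtain ⟨e₁, he₁mem, he₁⟩ := hl
            have hemb : Sym2.map (copyEmb f d (j 0)) e₁ = Sym2.map (copyEmb f d (j 0)) e₀ := by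
              rw [he₁, ← he₀]
              rfl
            have : e₁ = e₀ := Sym2.map.injective (copyEmb_injective f d (j 0)) hemb
            rw [this] at he₁mem
            exact pathTo_avoids_label f d (fun m => j m.succ) e₀ he₀mem he₁mem

end Edges
section Lex

lemma lexLt_cases {f d : ℕ} {j j' : Fin (f + 1) → Fin (d + 1)} (h : lexLt j j') :
    (j 0 : ℕ) < (j' 0 : ℕ) ∨
      (j 0 = j' 0 ∧ lexLt (fun m => j m.succ) (fun m => j' m.succ)) := by
  obtain ⟨k, hk, hlt⟩ := h
  rcases Fin.eq_zero_or_eq_succ k with hk0 | ⟨k', hk'⟩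
  · left
    rw [hk0] at hlt
    exact hlt
  · right
    subst hk'
    refine ⟨hk 0 (Fin.succ_pos k'), ⟨k', ?_, hlt⟩⟩
    intro m hm
    exact hk m.succ (by rwa [Fin.succ_lt_succ_iff])

lemma lexLt_elim0 {d : ℕ} {j j' : Fin 0 → Fin (d + 1)} (h : lexLt j j') : False := by
  obtain ⟨k, _, _⟩ := h
  exact k.elim0

lemma pathTo_hits_label : ∀ (f d : ℕ) (j j' : Fin f → Fin (d + 1)), lexLt j j' →
    ∃ e ∈ (pathTo f d j').edges, e ∈ labelG f d j
  | 0, d, j, j', h => absurd h lexLt_elim0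
  | (f + 1), d, j, j', h => by
      rcases lexLt_cases h with hlt | ⟨heq, htail⟩
      · -- the top edge (j 0, j 0 + 1) is used by pathTo j'
        have hjd : (j 0 : ℕ) < d := by
          have := (j' 0).isLt
          omega
        refine ⟨s(Sum.inl (j 0), Sum.inl (⟨(j 0 : ℕ) + 1, by omega⟩ : Fin (d + 1))), ?_, ?_⟩
        · erw [pathTo, SimpleGraph.Walk.edges_append, SimpleGraph.Walk.edges_append,
            SimpleGraph.Walk.edges_copy, List.mem_append, List.mem_append]
          left; left
          exact edge_mem_topWalk f d (j' 0) _ (j 0) ⟨(j 0 : ℕ) + 1, by omega⟩ rfl (by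
            show (j 0 : ℕ) + 1 ≤ (j' 0 : ℕ)
            omega)
        · rw [labelG, Set.mem_union]
          left
          rw [dif_pos hjd]
          exact Set.mem_singleton _
      · obtain ⟨e₀, he₀, hl₀⟩ := pathTo_hits_label f d (fun m => j m.succ) (fun m => j' m.succ) htail
        refine ⟨Sym2.map (copyEmb f d (j' 0)) e₀, ?_, ?_⟩
        · erw [pathTo, SimpleGraph.Walk.edges_append, List.mem_append]
          right
          erw [SimpleGraph.Walk.edges_map, List.mem_map]
          exact ⟨e₀, he₀, rfl⟩
        · rw [labelG, Set.mem_union]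
          right
          rw [heq]
          exact ⟨e₀, hl₀, rfl⟩

end Lex

section Length

/-- Maximal possible canonical path length. -/
def Mlen : ℕ → ℕ → ℕ
  | 0, _ => 0
  | (f + 1), d => QLen f d 0 + Mlen f d

/-- Minimal possible canonical path length. -/
def mlen : ℕ → ℕ → ℕ
  | 0, _ => 0
  | (f + 1), d => d + QLen f d (Fin.last d) + mlen f d

lemma QLen_zero_ge (f d : ℕ) (i : Fin (d + 1)) :
    (i : ℕ) + QLen f d i ≤ QLen f d 0 := by
  have hi : (i : ℕ) ≤ d := by omega
  cases f with
  | zero =>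
      show (i : ℕ) + (6 + 2 * (d - (i : ℕ))) ≤ 6 + 2 * (d - ((0 : Fin (d + 1)) : ℕ))
      simp only [Fin.val_zero]
      omega
  | succ f =>
      show (i : ℕ) + (d + 1 - (i : ℕ)) * depthG (f + 1) (d + 1) ≤
        (d + 1 - ((0 : Fin (d + 1)) : ℕ)) * depthG (f + 1) (d + 1)
      simp only [Fin.val_zero]
      have hD := depthG_ge f d
      have : (d + 1 - (i : ℕ)) * depthG (f + 1) (d + 1) + (i : ℕ) * depthG (f + 1) (d + 1)
          = (d + 1 - 0) * depthG (f + 1) (d + 1) := by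
        rw [← Nat.add_mul]
        congr 1
        omega
      have hle : (i : ℕ) ≤ (i : ℕ) * depthG (f + 1) (d + 1) :=
        Nat.le_mul_of_pos_right _ (by omega)
      omega

lemma QLen_last_le (f d : ℕ) (i : Fin (d + 1)) :
    d + QLen f d (Fin.last d) ≤ (i : ℕ) + QLen f d i := by
  have hi : (i : ℕ) ≤ d := by omega
  cases f with
  | zero =>
      show d + (6 + 2 * (d - ((Fin.last d) : ℕ))) ≤ (i : ℕ) + (6 + 2 * (d - (i : ℕ)))
      simp only [Fin.val_last]
      omega
  | succ f =>
      show d + (d + 1 - ((Fin.last d) : ℕ)) * depthG (f + 1) (d + 1) ≤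
        (i : ℕ) + (d + 1 - (i : ℕ)) * depthG (f + 1) (d + 1)
      simp only [Fin.val_last]
      have hD := depthG_ge f d
      have h1 : (d + 1 - (i : ℕ)) = (d - (i : ℕ)) + 1 := by omega
      rw [h1, Nat.add_mul, one_mul]
      have h2 : d + 1 - d = 1 := by omega
      rw [h2, one_mul]
      have h3 : d - (i : ℕ) ≤ (d - (i : ℕ)) * depthG (f + 1) (d + 1) :=
        Nat.le_mul_of_pos_right _ (by omega)
      omega

lemma plen_le_Mlen : ∀ (f d : ℕ) (j : Fin f → Fin (d + 1)), plen f d j ≤ Mlen f d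
  | 0, _, _ => le_rfl
  | (f + 1), d, j => by
      have h1 := QLen_zero_ge f d (j 0)
      have h2 := plen_le_Mlen f d (fun m => j m.succ)
      show (j 0 : ℕ) + QLen f d (j 0) + plen f d (fun m => j m.succ) ≤ QLen f d 0 + Mlen f d
      omega

lemma mlen_le_plen : ∀ (f d : ℕ) (j : Fin f → Fin (d + 1)), mlen f d ≤ plen f d j
  | 0, _, _ => le_rfl
  | (f + 1), d, j => by
      have h1 := QLen_last_le f d (j 0)
      have h2 := mlen_le_plen f d (fun m => j m.succ)
      show d + QLen f d (Fin.last d) + mlen f d ≤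
        (j 0 : ℕ) + QLen f d (j 0) + plen f d (fun m => j m.succ)
      omega

/-- Per-step length gap at a given level. -/
def gapG : ℕ → ℕ → ℕ
  | 0, _ => 1
  | (f + 1), d => depthG (f + 1) (d + 1) - 1

/-- Key gap inequality. -/
lemma key_gap : ∀ (f d : ℕ),
    QLen f d 0 + Mlen f d + 2 ≤
      depthG (f + 1) (d + 1) + d + QLen f d (Fin.last d) + mlen f d
  | 0, d => by
      show 6 + 2 * (d - ((0 : Fin (d + 1)) : ℕ)) + 0 + 2 ≤
        (6 + 2 * (d + 1 - 1)) + d + (6 + 2 * (d - ((Fin.last d) : ℕ))) + 0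
      simp only [Fin.val_zero, Fin.val_last]
      omega
  | (f + 1), d => by
      have ih := key_gap f d
      have hD := depthG_ge f d
      have hstep : depthG (f + 2) (d + 1) = (d + 1) * depthG (f + 1) (d + 1) := rfl
      show (d + 1 - ((0 : Fin (d + 1)) : ℕ)) * depthG (f + 1) (d + 1) +
          (QLen f d 0 + Mlen f d) + 2 ≤
        depthG (f + 2) (d + 1) + d +
          (d + 1 - ((Fin.last d) : ℕ)) * depthG (f + 1) (d + 1) +
          (d + QLen f d (Fin.last d) + mlen f d)
      simp only [Fin.val_zero, Fin.val_last]
      rw [hstep]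
      have h1 : d + 1 - d = 1 := by omega
      rw [h1, one_mul, Nat.sub_zero]
      omega

lemma step_gap (f d : ℕ) (x y : Fin (d + 1)) (h : (y : ℕ) < (x : ℕ)) :
    (x : ℕ) + QLen f d x + gapG f d ≤ (y : ℕ) + QLen f d y := by
  have hx : (x : ℕ) ≤ d := by omega
  cases f with
  | zero =>
      show (x : ℕ) + (6 + 2 * (d - (x : ℕ))) + 1 ≤ (y : ℕ) + (6 + 2 * (d - (y : ℕ)))
      omega
  | succ f =>
      have hD := depthG_ge f d
      show (x : ℕ) + (d + 1 - (x : ℕ)) * depthG (f + 1) (d + 1) +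
          (depthG (f + 1) (d + 1) - 1) ≤
        (y : ℕ) + (d + 1 - (y : ℕ)) * depthG (f + 1) (d + 1)
      obtain ⟨t, htt⟩ : ∃ t, (x : ℕ) - (y : ℕ) = t + 1 := ⟨(x : ℕ) - (y : ℕ) - 1, by omega⟩
      have hsplit : (d + 1 - ((y : ℕ))) = (d + 1 - ((x : ℕ))) + (t + 1) := by omega
      rw [hsplit, Nat.add_mul, Nat.add_mul, one_mul]
      have ht2 : t ≤ t * depthG (f + 1) (d + 1) := Nat.le_mul_of_pos_right _ (by omega)
      omega

lemma mlen_gap (f d : ℕ) : Mlen f d < gapG f d + mlen f d := by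
  cases f with
  | zero => show (0 : ℕ) < 1 + 0; omega
  | succ f =>
      have ih := key_gap f d
      have hD := depthG_ge f d
      show QLen f d 0 + Mlen f d < (depthG (f + 1) (d + 1) - 1) + (d + QLen f d (Fin.last d) + mlen f d)
      omega

/-- Strict monotonicity of path lengths w.r.t. the left-to-right order. -/
lemma plen_lt_of_lexLt : ∀ (f d : ℕ) (j j' : Fin f → Fin (d + 1)), lexLt j' j →
    plen f d j < plen f d j'
  | 0, _, _, _, h => absurd h lexLt_elim0
  | (f + 1), d, j, j', h => by
      rcases lexLt_cases h with hlt | ⟨heq, htail⟩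
      · have hM := plen_le_Mlen f d (fun m => j m.succ)
        have hm := mlen_le_plen f d (fun m => j' m.succ)
        have hstep := step_gap f d (j 0) (j' 0) hlt
        have hdom := mlen_gap f d
        show (j 0 : ℕ) + QLen f d (j 0) + plen f d (fun m => j m.succ) <
          (j' 0 : ℕ) + QLen f d (j' 0) + plen f d (fun m => j' m.succ)
        omega
      · have ih := plen_lt_of_lexLt f d (fun m => j m.succ) (fun m => j' m.succ) htail
        show (j 0 : ℕ) + QLen f d (j 0) + plen f d (fun m => j m.succ) <
          (j' 0 : ℕ) + QLen f d (j' 0) + plen f d (fun m => j' m.succ)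
        rw [heq]
        omega

end Length
/-- In the lower-bound graph `G_f(d)` (here with `d+1 ≥ 1` path vertices
per level), for every leaf `z_j` (addressed by `j`): (1) there is a unique path from the
root to `z_j`; (2) this path survives the deletion of the at most `f` edges of
`Label_f(z_j)`; (3) for every leaf `z_{j'}` to the right of `z_j` (i.e. `j <lex j'`), every
root-to-`z_{j'}` path uses an edge of `Label_f(z_j)`; and (4) for every leaf `z_{j'}` to the
left of `z_j`, the root-to-`z_{j'}` path is strictly longer than the root-to-`z_j` path. -/
theorem lower_bound_graph_path_properties (f d : ℕ) (hf : 1 ≤ f)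
    (j : Fin f → Fin (d + 1)) :
    (∃! p : (Gf f d).Walk (rootVtx f d) (leafVtx f d j), p.IsPath) ∧
    (∀ p : (Gf f d).Walk (rootVtx f d) (leafVtx f d j), p.IsPath →
      ∀ e ∈ p.edges, e ∉ labelG f d j) ∧
    (∀ j' : Fin f → Fin (d + 1), lexLt j j' →
      ∀ p : (Gf f d).Walk (rootVtx f d) (leafVtx f d j'), p.IsPath →
        ∃ e ∈ p.edges, e ∈ labelG f d j) ∧
    (∀ j' : Fin f → Fin (d + 1), lexLt j' j →
      ∀ (p : (Gf f d).Walk (rootVtx f d) (leafVtx f d j'))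
        (q : (Gf f d).Walk (rootVtx f d) (leafVtx f d j)),
        p.IsPath → q.IsPath → q.length < p.length) := by
  refine ⟨⟨pathTo f d j, isPath_pathTo f d j,
      fun p hp => path_unique f d p (pathTo f d j) hp (isPath_pathTo f d j)⟩, ?_, ?_, ?_⟩
  · intro p hp e he
    rw [path_unique f d p (pathTo f d j) hp (isPath_pathTo f d j)] at he
    exact pathTo_avoids_label f d j e he
  · intro j' hlex p hp
    rw [path_unique f d p (pathTo f d j') hp (isPath_pathTo f d j')]
    exact pathTo_hits_label f d j j' hlex
  · intro j' hlex p q hp hq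
    rw [path_unique f d p (pathTo f d j') hp (isPath_pathTo f d j'),
      path_unique f d q (pathTo f d j) hq (isPath_pathTo f d j),
      length_pathTo, length_pathTo]
    exact plen_lt_of_lexLt f d j j' hlex
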